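/- For integers n > 1 and 1 ≤ k ≤ n-1, the congruence [2k-1 choose k]_q ≡ (-1)^k q^{(3k²-k)/2} [n-k choose k]_q holds modulo Φ_n(q). -/

import Mathlib

open Polynomial Finset

/-- The Gaussian (q-)binomial coefficient as a polynomial in `ℤ[q]`
(via the standard Pascal recursion `[n+1,k+1] = [n,k] + q^(k+1)·[n,k+1]`). -/
noncomputable def gbinom : ℕ → ℕ → Polynomial ℤ
  | _, 0 => 1
  | 0, _ + 1 => 0
  | n + 1, k + 1 => gbinom n k + Polynomial.X ^ (k + 1) * gbinom n (k + 1)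

lemma gbinom_eq_zero : ∀ m k : ℕ, m < k → gbinom m k = 0
  | 0, _ + 1, _ => rfl
  | m + 1, k + 1, h => by
    rw [gbinom, gbinom_eq_zero m k (by omega), gbinom_eq_zero m (k + 1) (by omega)]
    ring

/-- The fundamental "product formula" for the Gaussian binomial, evaluated at any point. -/
lemma gbinom_mul_prod (ζ : ℂ) : ∀ m k : ℕ,
    (aeval ζ (gbinom m k)) * ∏ i ∈ range k, (ζ ^ (i + 1) - 1)
      = ∏ i ∈ range k, (ζ ^ (m - i) - 1)
  | _, 0 => by simp [gbinom]
  | 0, k + 1 => by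
      rw [gbinom, map_zero, zero_mul]
      exact (Finset.prod_eq_zero (Finset.mem_range.2 (Nat.succ_pos k))
        (by simp)).symm
  | m + 1, k + 1 => by
      have IH1 := gbinom_mul_prod ζ m k
      have IH2 := gbinom_mul_prod ζ m (k + 1)
      rw [gbinom, map_add, map_mul, map_pow, aeval_X]
      rw [Finset.prod_range_succ (fun i => (ζ ^ (i + 1) - 1)) k]
      have hRHS : ∏ i ∈ range (k + 1), (ζ ^ (m + 1 - i) - 1)
          = (∏ i ∈ range k, (ζ ^ (m - i) - 1)) * (ζ ^ (m + 1) - 1) := by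
        rw [Finset.prod_range_succ' (fun i => (ζ ^ (m + 1 - i) - 1)) k]
        simp [Nat.succ_sub_succ]
      rw [hRHS]
      have hN2 : ∏ i ∈ range (k + 1), (ζ ^ (m - i) - 1)
          = (∏ i ∈ range k, (ζ ^ (m - i) - 1)) * (ζ ^ (m - k) - 1) :=
        Finset.prod_range_succ _ k
      rcases lt_or_ge m k with hmk | hmk
      · -- both sides are 0 since the factor at i = m is ζ^0 - 1 = 0
        have h0 : ∏ i ∈ range k, (ζ ^ (m - i) - 1) = 0 :=
          Finset.prod_eq_zero (Finset.mem_range.2 hmk) (by simp)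
        rw [hN2] at IH2
        calc (aeval ζ (gbinom m k) + ζ ^ (k + 1) * aeval ζ (gbinom m (k + 1))) *
              ((∏ i ∈ range k, (ζ ^ (i + 1) - 1)) * (ζ ^ (k + 1) - 1))
            = (aeval ζ (gbinom m k) * ∏ i ∈ range k, (ζ ^ (i + 1) - 1)) * (ζ ^ (k + 1) - 1)
              + ζ ^ (k + 1) * ((aeval ζ (gbinom m (k + 1))) *
                ((∏ i ∈ range k, (ζ ^ (i + 1) - 1)) * (ζ ^ (k + 1) - 1))) := by ring
          _ = 0 := by
              rw [IH1, h0, ← Finset.prod_range_succ (fun i => (ζ ^ (i + 1) - 1)) k, IH2, h0]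
              ring
          _ = (∏ i ∈ range k, (ζ ^ (m - i) - 1)) * (ζ ^ (m + 1) - 1) := by rw [h0]; ring
      · -- the generic computation
        have hpow : ζ ^ (k + 1) * ζ ^ (m - k) = ζ ^ (m + 1) := by
          rw [← pow_add]
          congr 1
          omega
        rw [hN2] at IH2
        calc (aeval ζ (gbinom m k) + ζ ^ (k + 1) * aeval ζ (gbinom m (k + 1))) *
              ((∏ i ∈ range k, (ζ ^ (i + 1) - 1)) * (ζ ^ (k + 1) - 1))
            = (aeval ζ (gbinom m k) * ∏ i ∈ range k, (ζ ^ (i + 1) - 1)) * (ζ ^ (k + 1) - 1)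
              + ζ ^ (k + 1) * ((aeval ζ (gbinom m (k + 1))) *
                ((∏ i ∈ range k, (ζ ^ (i + 1) - 1)) * (ζ ^ (k + 1) - 1))) := by ring
          _ = (∏ i ∈ range k, (ζ ^ (m - i) - 1)) * (ζ ^ (k + 1) - 1)
              + ζ ^ (k + 1) * ((∏ i ∈ range k, (ζ ^ (m - i) - 1)) * (ζ ^ (m - k) - 1)) := by
              rw [IH1, ← Finset.prod_range_succ (fun i => (ζ ^ (i + 1) - 1)) k, IH2]
          _ = (∏ i ∈ range k, (ζ ^ (m - i) - 1)) *
              ((ζ ^ (k + 1) - 1) + ζ ^ (k + 1) * (ζ ^ (m - k) - 1)) := by ring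
          _ = (∏ i ∈ range k, (ζ ^ (m - i) - 1)) * (ζ ^ (m + 1) - 1) := by
              have hstep : (ζ ^ (k + 1) - 1) + ζ ^ (k + 1) * (ζ ^ (m - k) - 1)
                  = ζ ^ (m + 1) - 1 := by linear_combination hpow
              rw [hstep]

lemma sum_exponents (k : ℕ) (hk : 1 ≤ k) :
    ∑ i ∈ range k, (2 * k - 1 - i) = (3 * k ^ 2 - k) / 2 := by
  obtain ⟨k', rfl⟩ : ∃ k', k = k' + 1 := ⟨k - 1, by omega⟩
  set k := k' + 1 with hkdef
  have h1 : ∑ i ∈ range k, (2 * k - 1 - (k - 1 - i)) = ∑ i ∈ range k, (2 * k - 1 - i) :=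
    Finset.sum_range_reflect (fun i => 2 * k - 1 - i) k
  have h2 : ∑ i ∈ range k, (2 * k - 1 - (k - 1 - i)) = ∑ i ∈ range k, (k + i) := by
    apply Finset.sum_congr rfl
    intro i hi
    rw [Finset.mem_range] at hi
    omega
  have h3 : ∑ i ∈ range k, (k + i) = k * k + ∑ i ∈ range k, i := by
    rw [Finset.sum_add_distrib, Finset.sum_const, Finset.card_range, smul_eq_mul]
  have h4 : (∑ i ∈ range k, i) * 2 = k * k' := by
    exact (Finset.sum_range_id_mul_two k).trans (by rw [hkdef, Nat.add_sub_cancel])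
  have h5 : k * k = k * k' + k := by rw [hkdef]; ring
  rw [← h1, h2, h3, pow_two]
  set a := k * k' with ha
  set t := k * k with ht
  set s := ∑ i ∈ range k, i with hs
  omega

theorem stmt_3 (n k : ℕ) (hn : 1 < n) (hk1 : 1 ≤ k) (hk2 : k ≤ n - 1) :
    Polynomial.cyclotomic n ℤ ∣
      (gbinom (2 * k - 1) k -
        (-1) ^ k * Polynomial.X ^ ((3 * k ^ 2 - k) / 2) * gbinom (n - k) k) := by
  set ζ : ℂ := Complex.exp (2 * Real.pi * Complex.I / n) with hζdef
  have hζ : IsPrimitiveRoot ζ n := Complex.isPrimitiveRoot_exp n (by omega)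
  have hnpos : 0 < n := by omega
  -- It suffices to show the polynomial vanishes at ζ
  rw [Polynomial.cyclotomic_eq_minpoly hζ hnpos]
  apply minpoly.isIntegrallyClosed_dvd (hζ.isIntegral hnpos)
  rw [map_sub, map_mul, map_mul, map_pow, map_pow, aeval_X, map_neg, map_one]
  -- Notation: D is the common denominator, it is nonzero
  set D : ℂ := ∏ i ∈ range k, (ζ ^ (i + 1) - 1) with hD
  have hDne : D ≠ 0 := by
    rw [hD, Finset.prod_ne_zero_iff]
    intro i hi
    rw [Finset.mem_range] at hi
    intro h
    have h1 : ζ ^ (i + 1) = 1 := by rwa [sub_eq_zero] at h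
    refine hζ.pow_ne_one_of_pos_of_lt ?_ ?_ h1 <;> omega
  rw [sub_eq_zero]
  -- Multiply through by D and use the product formula
  apply mul_right_cancel₀ hDne
  rw [gbinom_mul_prod ζ (2 * k - 1) k, mul_assoc, gbinom_mul_prod ζ (n - k) k]
  -- Now prove the identity between the two numerator products
  have hζn : ζ ^ n = 1 := hζ.pow_eq_one
  rcases le_or_gt (2 * k - 1) n with hcase | hcase
  · -- generic case: match terms after reflecting the second product
    have hrefl : ∏ i ∈ range k, (ζ ^ (n - k - i) - 1)
        = ∏ i ∈ range k, (ζ ^ (n - k - (k - 1 - i)) - 1) :=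
      (Finset.prod_range_reflect (fun i => (ζ ^ (n - k - i) - 1)) k).symm
    have hmatch : ∀ i ∈ range k,
        ζ ^ (2 * k - 1 - i) - 1 = (-(ζ ^ (2 * k - 1 - i))) * (ζ ^ (n - k - (k - 1 - i)) - 1) := by
      intro i hi
      rw [Finset.mem_range] at hi
      have he : n - k - (k - 1 - i) = n - (2 * k - 1 - i) := by omega
      have hpow : ζ ^ (2 * k - 1 - i) * ζ ^ (n - (2 * k - 1 - i)) = 1 := by
        rw [← pow_add, show 2 * k - 1 - i + (n - (2 * k - 1 - i)) = n by omega, hζn]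
      rw [he, mul_sub, neg_mul, neg_mul, hpow]
      ring
    rw [Finset.prod_congr rfl hmatch, Finset.prod_mul_distrib, hrefl]
    congr 1
    have : ∏ i ∈ range k, (-(ζ ^ (2 * k - 1 - i))) = (-1 : ℂ) ^ k * ζ ^ ((3 * k ^ 2 - k) / 2) := by
      have : ∀ i ∈ range k, (-(ζ ^ (2 * k - 1 - i))) = (-1 : ℂ) * ζ ^ (2 * k - 1 - i) := by
        intro i _; ring
      rw [Finset.prod_congr rfl this, Finset.prod_mul_distrib, Finset.prod_const,
        Finset.card_range, Finset.prod_pow_eq_pow_sum, sum_exponents k hk1]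
    rw [this]
  · -- degenerate case: both products vanish
    have hL : ∏ i ∈ range k, (ζ ^ (2 * k - 1 - i) - 1) = 0 := by
      apply Finset.prod_eq_zero (i := 2 * k - 1 - n) (Finset.mem_range.2 (by omega))
      rw [show 2 * k - 1 - (2 * k - 1 - n) = n by omega, hζn, sub_self]
    have hR : ∏ i ∈ range k, (ζ ^ (n - k - i) - 1) = 0 := by
      apply Finset.prod_eq_zero (i := n - k) (Finset.mem_range.2 (by omega))
      rw [show n - k - (n - k) = 0 by omega, pow_zero, sub_self]
    rw [hL, hR, mul_zero]
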